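/- Let m, a, b be positive integers, and set N := 2m+1 and d := a+b. Let f(x,y) := x^{aN} y^{bN} + (x^N + y^N + x^m y^m)^d ∈ ℂ[x,y] be the dehomogenization at z = 1 of F(x,y,z) := x^{aN} y^{bN} + (x^N + y^N + x^m y^m z)^d. Then every monomial appearing in f with nonzero coefficient has total degree at least 2md = (N-1)d, and the homogeneous component of f of degree 2md equals x^{md} y^{md}. (Equivalently: the curve F = 0 has multiplicity (N-1)d at the point P = [0:0:1], and its tangent cone at P is the union of the two lines x = 0 and y = 0.) -/

import Mathlib

open MvPolynomial

lemma degsum_eq (v : Fin 2 →₀ ℕ) : v.degree = ∑ i, v i :=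
  Finset.sum_subset (Finset.subset_univ _)
    (fun i _ hi => Finsupp.notMem_support_iff.mp hi)

lemma degsum_of_homog {p : MvPolynomial (Fin 2) ℂ} {n : ℕ}
    (hp : p.IsHomogeneous n) {v : Fin 2 →₀ ℕ} (hv : v ∈ p.support) :
    ∑ i, v i = n := by
  rw [← degsum_eq]
  have := hp (MvPolynomial.mem_support_iff.mp hv)
  rw [Finsupp.degree_eq_weight_one]; exact this

/-- With `N = 2m+1`, `d = a+b` and
`f = x^{aN} y^{bN} + (x^N + y^N + x^m y^m)^d ∈ ℂ[x,y]` (the dehomogenization at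
`z = 1`), every monomial of `f` with nonzero coefficient has total degree at
least `2md = (N-1)d`, and the homogeneous component of `f` of degree `2md` is
`x^{md} y^{md}`. (So the curve has multiplicity `(N-1)d` at `P = [0:0:1]` and
its tangent cone there is the union of the lines `x = 0` and `y = 0`.) -/
theorem stmt_9 (m a b N d : ℕ) (hm : 0 < m) (ha : 0 < a) (hb : 0 < b)
    (hN : N = 2 * m + 1) (hd : d = a + b)
    (f : MvPolynomial (Fin 2) ℂ)
    (hf : f = X 0 ^ (a * N) * X 1 ^ (b * N) +
      (X 0 ^ N + X 1 ^ N + X 0 ^ m * X 1 ^ m) ^ d) :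
    (∀ v ∈ f.support, 2 * m * d ≤ ∑ i, v i) ∧
      MvPolynomial.homogeneousComponent (2 * m * d) f =
        X 0 ^ (m * d) * X 1 ^ (m * d) := by
  classical
  set A : MvPolynomial (Fin 2) ℂ := X 0 ^ N + X 1 ^ N with hA
  set C0 : MvPolynomial (Fin 2) ℂ := X 0 ^ m * X 1 ^ m with hC0
  have hAh : A.IsHomogeneous N := (isHomogeneous_X_pow 0 N).add (isHomogeneous_X_pow 1 N)
  have hC0h : C0.IsHomogeneous (2 * m) := by
    rw [hC0, two_mul]
    exact (isHomogeneous_X_pow (R := ℂ) 0 m).mul (isHomogeneous_X_pow 1 m)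
  set T1 : MvPolynomial (Fin 2) ℂ := X 0 ^ (a * N) * X 1 ^ (b * N) with hT1
  set S : ℕ → MvPolynomial (Fin 2) ℂ :=
    fun k => A ^ k * C0 ^ (d - k) * (d.choose k : MvPolynomial (Fin 2) ℂ) with hS
  have hC0d : C0 ^ d = X 0 ^ (m * d) * X 1 ^ (m * d) := by
    rw [hC0, mul_pow, ← pow_mul, ← pow_mul]
  have hsplit : f = X 0 ^ (m * d) * X 1 ^ (m * d) + (T1 + ∑ k ∈ Finset.range d, S (k + 1)) := by
    have hpow : (A + C0) ^ d = ∑ k ∈ Finset.range (d + 1), S k := add_pow A C0 d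
    rw [hf, hpow, Finset.sum_range_succ']
    have hS0 : S 0 = X 0 ^ (m * d) * X 1 ^ (m * d) := by
      show A ^ 0 * C0 ^ (d - 0) * (d.choose 0 : MvPolynomial (Fin 2) ℂ) = _
      simp [hC0d]
    rw [hS0]; ring
  have hSk : ∀ k ∈ Finset.range d,
      (S (k + 1)).IsHomogeneous ((k + 1) * N + 2 * m * (d - (k + 1))) := by
    intro k hk
    show (A ^ (k + 1) * C0 ^ (d - (k + 1)) *
      ((d.choose (k + 1) : ℕ) : MvPolynomial (Fin 2) ℂ)).IsHomogeneous _
    have h1 : (A ^ (k + 1)).IsHomogeneous (N * (k + 1)) := hAh.pow _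
    have h2 : (C0 ^ (d - (k + 1))).IsHomogeneous (2 * m * (d - (k + 1))) := hC0h.pow _
    have h3 := (h1.mul h2).C_mul ((d.choose (k + 1) : ℂ))
    rw [mul_comm (C ((d.choose (k + 1) : ℂ))) _, mul_comm N (k + 1)] at h3
    rw [show ((d.choose (k + 1) : ℕ) : MvPolynomial (Fin 2) ℂ)
      = C ((d.choose (k + 1) : ℂ)) from (MvPolynomial.C_eq_coe_nat _).symm]
    exact h3
  have hdegk : ∀ k ∈ Finset.range d, 2 * m * d < (k + 1) * N + 2 * m * (d - (k + 1)) := by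
    intro k hk
    have hkd : k + 1 ≤ d := Finset.mem_range.mp hk
    obtain ⟨t, ht⟩ : ∃ t, d = (k + 1) + t := ⟨d - (k + 1), (Nat.add_sub_cancel' hkd).symm⟩
    rw [ht, Nat.add_sub_cancel_left]
    subst hN
    nlinarith
  have hT1h : T1.IsHomogeneous (a * N + b * N) :=
    (isHomogeneous_X_pow 0 (a * N)).mul (isHomogeneous_X_pow 1 (b * N))
  have hT1deg : 2 * m * d < a * N + b * N := by
    subst hN hd; nlinarith
  set R : MvPolynomial (Fin 2) ℂ := T1 + ∑ k ∈ Finset.range d, S (k + 1) with hR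
  have hRsupp : ∀ v ∈ R.support, 2 * m * d < ∑ i, v i := by
    intro v hv
    rcases Finset.mem_union.mp (MvPolynomial.support_add hv) with h | h
    · rw [degsum_of_homog hT1h h]; exact hT1deg
    · rcases Finset.mem_biUnion.mp (MvPolynomial.support_sum h) with ⟨k, hk, hvk⟩
      rw [degsum_of_homog (hSk k hk) hvk]
      exact hdegk k hk
  have hmono : (X 0 ^ (m * d) * X 1 ^ (m * d) : MvPolynomial (Fin 2) ℂ).IsHomogeneous
      (2 * m * d) := by
    have h1 := (isHomogeneous_X_pow (R := ℂ) (0 : Fin 2) (m * d)).mul (isHomogeneous_X_pow (1 : Fin 2) (m * d))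
    have h2 : m * d + m * d = 2 * m * d := by ring
    exact h2 ▸ h1
  constructor
  · intro v hv
    rw [hsplit] at hv
    rcases Finset.mem_union.mp (MvPolynomial.support_add hv) with h | h
    · exact (degsum_of_homog hmono h).ge
    · exact (hRsupp v h).le
  · rw [hsplit, map_add]
    have h1 : homogeneousComponent (2 * m * d)
        (X 0 ^ (m * d) * X 1 ^ (m * d) : MvPolynomial (Fin 2) ℂ)
        = X 0 ^ (m * d) * X 1 ^ (m * d) := by
      rw [homogeneousComponent_of_mem hmono, if_pos rfl]
    have h2 : homogeneousComponent (2 * m * d) R = 0 := by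
      ext v
      rw [coeff_homogeneousComponent]
      split_ifs with h
      · by_contra hc
        have hv : v ∈ R.support := MvPolynomial.mem_support_iff.mpr (by simpa using hc)
        have h3 := hRsupp v hv
        rw [← degsum_eq, h] at h3
        omega
      · simp
    rw [h1, h2, add_zero]
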